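/- With θ(t) the ℓ2-regularized solution path, the map t ↦ ‖θ(t)‖/C(t) is nonincreasing on (0,∞). -/

import Mathlib

open RealInnerProductSpace in
lemma grad_ineq_aux {p : ℕ} (L : EuclideanSpace ℝ (Fin p) → ℝ)
    (hL : ConvexOn ℝ Set.univ L) (c : ℝ) (hc : 0 < c)
    (x : EuclideanSpace ℝ (Fin p))
    (hx : ∀ y, c * L x + ‖x‖ ^ 2 / 2 ≤ c * L y + ‖y‖ ^ 2 / 2)
    (y : EuclideanSpace ℝ (Fin p)) :
    0 ≤ c * (L y - L x) + ⟪x, y - x⟫ := by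
  set B : ℝ := ‖y - x‖ ^ 2 / 2 with hB
  have hB0 : 0 ≤ B := by positivity
  refine le_of_forall_pos_le_add ?_
  intro ε hε
  set l : ℝ := min 1 (ε / (B + 1)) with hl
  have hl0 : 0 < l := lt_min one_pos (by positivity)
  have hl1 : l ≤ 1 := min_le_left _ _
  have hlB : l * B ≤ ε := by
    have h1 : l ≤ ε / (B + 1) := min_le_right _ _
    have : l * B ≤ (ε / (B + 1)) * B := by
      exact mul_le_mul_of_nonneg_right h1 hB0
    have h2 : (ε / (B + 1)) * B ≤ ε := by
      rw [div_mul_eq_mul_div, div_le_iff₀ (by positivity)]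
      nlinarith
    linarith
  have hconv := hL.2 (Set.mem_univ x) (Set.mem_univ y)
    (by linarith : (0:ℝ) ≤ 1 - l) hl0.le (by ring)
  have hz := hx ((1 - l) • x + l • y)
  have hzeq : (1 - l) • x + l • y = x + l • (y - x) := by module
  have hnorm : ‖x + l • (y - x)‖ ^ 2
      = ‖x‖ ^ 2 + 2 * (l * ⟪x, y - x⟫) + l ^ 2 * ‖y - x‖ ^ 2 := by
    rw [norm_add_sq_real, real_inner_smul_right, norm_smul]
    rw [Real.norm_eq_abs, abs_of_pos hl0]
    ring
  rw [hzeq] at hz hconv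
  simp only [smul_eq_mul] at hconv
  rw [hnorm] at hz
  have key : 0 ≤ l * (c * (L y - L x) + ⟪x, y - x⟫ + l * B) := by
    nlinarith [mul_le_mul_of_nonneg_left hconv hc.le]
  have key2 : 0 ≤ c * (L y - L x) + ⟪x, y - x⟫ + l * B := by
    by_contra h
    push_neg at h
    nlinarith [mul_pos hl0 (neg_pos.mpr h)]
  linarith

theorem path_norm_over_C_antitone {p : ℕ}
    (L : EuclideanSpace ℝ (Fin p) → ℝ) (hL : ConvexOn ℝ Set.univ L)
    (C : ℝ → ℝ) (hCpos : ∀ t > 0, 0 < C t) (hCmono : StrictMonoOn C (Set.Ioi 0))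
    (hClim : Filter.Tendsto C (nhdsWithin 0 (Set.Ioi 0)) (nhds 0))
    (θ : ℝ → EuclideanSpace ℝ (Fin p))
    (hθ : ∀ s > 0, ∀ y, C s * L (θ s) + ‖θ s‖ ^ 2 / 2 ≤ C s * L y + ‖y‖ ^ 2 / 2) :
    AntitoneOn (fun t => ‖θ t‖ / C t) (Set.Ioi 0) := by
  intro s hs t ht hst
  rcases eq_or_lt_of_le hst with rfl | hlt
  · exact le_refl _
  simp only
  have hcs : 0 < C s := hCpos s hs
  have hct : 0 < C t := hCpos t ht
  have hcst : C s < C t := hCmono hs ht hlt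
  have h1 := grad_ineq_aux L hL (C s) hcs (θ s) (hθ s hs) (θ t)
  have h2 := grad_ineq_aux L hL (C t) hct (θ t) (hθ t ht) (θ s)
  have hi1 : (inner ℝ (θ s) (θ t - θ s) : ℝ)
      = inner ℝ (θ s) (θ t) - ‖θ s‖ ^ 2 := by
    rw [inner_sub_right, real_inner_self_eq_norm_sq]
  have hi2 : (inner ℝ (θ t) (θ s - θ t) : ℝ)
      = inner ℝ (θ s) (θ t) - ‖θ t‖ ^ 2 := by
    rw [inner_sub_right, real_inner_self_eq_norm_sq, real_inner_comm]
  rw [hi1] at h1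
  rw [hi2] at h2
  have hCS : (inner ℝ (θ s) (θ t) : ℝ) ≤ ‖θ s‖ * ‖θ t‖ := real_inner_le_norm _ _
  have key : C t * ‖θ s‖ ^ 2 + C s * ‖θ t‖ ^ 2
      ≤ (C s + C t) * (‖θ s‖ * ‖θ t‖) := by
    nlinarith [mul_le_mul_of_nonneg_left h1 hct.le,
      mul_le_mul_of_nonneg_left h2 hcs.le,
      mul_le_mul_of_nonneg_left hCS (by positivity : (0:ℝ) ≤ C s + C t)]
  rw [div_le_div_iff₀ hct hcs]
  nlinarith [key, hcs, hct, hcst, norm_nonneg (θ s), norm_nonneg (θ t),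
    mul_le_mul_of_nonneg_left hcst.le (norm_nonneg (θ s))]
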